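/- In the graph Γ_n, any set of n edges {(A_1,i_1), (A_2,i_2), …, (A_n,i_n)} with i_1, i_2, …, i_n pairwise distinct is ample. -/
import Mathlib


open Polynomial

/-- A directed graph: a set `V` of vertices, a set `E` of edges, and tail/head maps. -/
structure DGraph (V E : Type*) where
  tl : E → V
  hd : E → V

namespace DGraph

variable {V E : Type*} (G : DGraph V E)

/-- `DPath G u l v`: the list of edges `l` is a positive (directed) path from `u` to `v`. -/
inductive DPath : V → List E → V → Prop
  | nil (v : V) : DPath v [] v
  | cons (e : E) {w : V} {l : List E} : DPath (G.hd e) l w → DPath (G.tl e) (e :: l) w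

/-- There is a positive path from `u` to `v`. -/
def Reach (u v : V) : Prop := ∃ l : List E, G.DPath u l v

/-- A source is a vertex which is not the head of any edge. -/
def IsSource (v : V) : Prop := ∀ e : E, G.hd e ≠ v

/-- A sink is a vertex which is not the tail of any edge. -/
def IsSink (v : V) : Prop := ∀ e : E, G.tl e ≠ v

/-- A graph is simple if edges are determined by their endpoints. -/
def Simple : Prop := ∀ e f : E, G.tl e = G.tl f → G.hd e = G.hd f → e = f

/-- A graph is acyclic if there is no nonempty directed path from a vertex to itself. -/
def Acyclic : Prop := ∀ (v : V) (l : List E), G.DPath v l v → l = []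

/-- A graph is layered if it admits a rank function decreasing by 1 along each edge. -/
def Layered : Prop := ∃ r : V → ℕ, ∀ e : E, r (G.tl e) = r (G.hd e) + 1

/-- A graph is modular if any two edges with a common tail can be completed downwards to a
diamond, and any two edges with a common head can be completed upwards to a diamond. -/
def Modular : Prop :=
  (∀ e₁ e₂ : E, G.tl e₁ = G.tl e₂ →
    ∃ f₁ f₂ : E, G.hd f₁ = G.hd f₂ ∧ G.hd e₁ = G.tl f₁ ∧ G.hd e₂ = G.tl f₂) ∧
  (∀ f₁ f₂ : E, G.hd f₁ = G.hd f₂ →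
    ∃ e₁ e₂ : E, G.tl e₁ = G.tl e₂ ∧ G.hd e₁ = G.tl f₁ ∧ G.hd e₂ = G.tl f₂)

/-- A set of edges `E₀` is complete if it is closed under `D`- and `U`-operations:
whenever `e₁, e₂, f₁, f₂` form a diamond (`t(e₁) = t(e₂)`, `h(f₁) = h(f₂)`,
`h(eᵢ) = t(fᵢ)`), if `e₁, e₂ ∈ E₀` then `f₁, f₂ ∈ E₀`, and if `f₁, f₂ ∈ E₀` then
`e₁, e₂ ∈ E₀`. -/
def CompleteSet (E₀ : Set E) : Prop :=
  (∀ e₁ e₂ f₁ f₂ : E, e₁ ∈ E₀ → e₂ ∈ E₀ → G.tl e₁ = G.tl e₂ → G.hd f₁ = G.hd f₂ →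
    G.hd e₁ = G.tl f₁ → G.hd e₂ = G.tl f₂ → f₁ ∈ E₀ ∧ f₂ ∈ E₀) ∧
  (∀ e₁ e₂ f₁ f₂ : E, f₁ ∈ E₀ → f₂ ∈ E₀ → G.tl e₁ = G.tl e₂ → G.hd f₁ = G.hd f₂ →
    G.hd e₁ = G.tl f₁ → G.hd e₂ = G.tl f₂ → e₁ ∈ E₀ ∧ e₂ ∈ E₀)

/-- The set of all heads and tails of edges in `E₀`. -/
def VertexOf (E₀ : Set E) : Set V := {v | ∃ e ∈ E₀, G.tl e = v ∨ G.hd e = v}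

/-- One step of a walk traversing an edge of `E₀` in either direction. -/
def EdgeStep (E₀ : Set E) (v w : V) : Prop :=
  ∃ e ∈ E₀, (G.tl e = v ∧ G.hd e = w) ∨ (G.tl e = w ∧ G.hd e = v)

/-- A set of edges is connected if any two of its vertices are joined by a walk
traversing its edges in either direction. -/
def ConnectedEdges (E₀ : Set E) : Prop :=
  ∀ v ∈ G.VertexOf E₀, ∀ w ∈ G.VertexOf E₀, Relation.ReflTransGen (G.EdgeStep E₀) v w

/-- A set of vertices `W` is ample if for every non-sink `v` there is `u ∈ W` with no
positive path from `u` to `v`, and for every non-source `v` there is `w ∈ W` with no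
positive path from `v` to `w`. -/
def AmpleVerts (W : Set V) : Prop :=
  (∀ v : V, ¬ G.IsSink v → ∃ u ∈ W, ¬ G.Reach u v) ∧
  (∀ v : V, ¬ G.IsSource v → ∃ w ∈ W, ¬ G.Reach v w)

/-- A set of edges is ample if the set of its tails and heads is ample. -/
def AmpleEdges (E₀ : Set E) : Prop := G.AmpleVerts (G.VertexOf E₀)

end DGraph

/-- Edges of the graph `Γₙ`: pairs `(A, i)` with `A ⊆ {1,…,n}`, `i ∉ A`. -/
def QGen (n : ℕ) : Type := {p : Finset (Fin n) × Fin n // p.2 ∉ p.1}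

/-- The graph `Γₙ`: vertices are the subsets of `{1,…,n}` and the edge `(A,i)` has tail
`A ∪ {i}` and head `A`. -/
def GammaN (n : ℕ) : DGraph (Finset (Fin n)) (QGen n) :=
  ⟨fun e => insert e.1.2 e.1.1, fun e => e.1.1⟩

/-- In `Γₙ`, any set of `n` edges `{(A₁,i₁),…,(Aₙ,iₙ)}` with `i₁,…,iₙ` pairwise distinct
is ample. -/
theorem stmt14 (n : ℕ) (A : Fin n → Finset (Fin n)) (i : Fin n → Fin n)
    (h : ∀ k, i k ∉ A k) (hinj : Function.Injective i) :
    (GammaN n).AmpleEdges {e | ∃ k : Fin n, e = ⟨(A k, i k), h k⟩} := by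
  have hreach : ∀ (u : Finset (Fin n)) (l : List (QGen n)) (v : Finset (Fin n)),
      (GammaN n).DPath u l v → v ⊆ u := by
    intro u l v hp
    induction hp with
    | nil v => exact subset_rfl
    | cons e hp ih => exact ih.trans (Finset.subset_insert _ _)
  have hbij : Function.Bijective i := (Finite.injective_iff_bijective).1 hinj
  constructor
  · intro v hv
    have hvne : v ≠ ∅ := by
      intro hve
      apply hv
      intro e he
      rw [hve] at he
      exact Finset.insert_ne_empty _ _ he
    obtain ⟨j, hj⟩ := Finset.nonempty_iff_ne_empty.2 hvne
    obtain ⟨k, hk⟩ := hbij.2 j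
    refine ⟨A k, ⟨⟨(A k, i k), h k⟩, ⟨k, rfl⟩, Or.inr rfl⟩, ?_⟩
    rintro ⟨l, hp⟩
    exact h k (hk ▸ hreach _ _ _ hp hj)
  · intro v hv
    have hvne : v ≠ Finset.univ := by
      intro hve
      apply hv
      intro e he
      exact e.2 (by rw [show (GammaN n).hd e = e.1.1 from rfl] at he; rw [he, hve]; exact Finset.mem_univ _)
    obtain ⟨j, hj⟩ : ∃ j, j ∉ v := by
      by_contra hc
      push_neg at hc
      exact hvne (Finset.eq_univ_iff_forall.2 hc)
    obtain ⟨k, hk⟩ := hbij.2 j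
    refine ⟨insert (i k) (A k), ⟨⟨(A k, i k), h k⟩, ⟨k, rfl⟩, Or.inl rfl⟩, ?_⟩
    rintro ⟨l, hp⟩
    exact hj (hk ▸ hreach _ _ _ hp (Finset.mem_insert_self _ _))
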